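/- Counterexample showing the first-coordinate-fixing assumption is essential: let X = {−1,1}, π uniform, P₀(x,·) = δ_x, Q₀(x,·) = επ + (1−ε)δ_{−x} for ε ∈ (0,1), P₁(x,·) = π, Q₁ = Q₀. Then P₁ ⪰₁ P₀ and Q₁ ⪰₁ Q₀, yet for f the identity, v(f, P₀Q₀) = ε/(2−ε) < 1 = v(f, P₁Q₁). -/

import Mathlib

open MeasureTheory Filter
open scoped ENNReal Topology

/-- Action of a plain-function kernel on functions. -/
noncomputable def actF {X : Type*} [MeasurableSpace X] (κ : X → Measure X) (f : X → ℝ) :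
    X → ℝ := fun x => ∫ y, f y ∂(κ x)

/-- `covH π T f k = Cov(f(Z₀), f(Z_k))` for the stationary homogeneous chain with
one-step operator `T`, started from `Z₀ ∼ π`. -/
noncomputable def covH {X : Type*} [MeasurableSpace X] (π : Measure X)
    (T : (X → ℝ) → X → ℝ) (f : X → ℝ) (k : ℕ) : ℝ :=
  (∫ x, f x * T^[k] f x ∂π) - (∫ x, f x ∂π) ^ 2

/-- `varH π T f n = Var(∑_{k=0}^{n-1} f(Z_k))` for the stationary homogeneous chain. -/
noncomputable def varH {X : Type*} [MeasurableSpace X] (π : Measure X)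
    (T : (X → ℝ) → X → ℝ) (f : X → ℝ) (n : ℕ) : ℝ :=
  ∑ i ∈ Finset.range n, ∑ j ∈ Finset.range n, covH π T f (max i j - min i j)

/-- The uniform distribution on `{-1, 1} ⊆ ℤ`. -/
noncomputable def pi16 : Measure ℤ := (2 : ℝ≥0∞)⁻¹ • (Measure.dirac 1 + Measure.dirac (-1))

/-- `P₀(x,·) = δ_x`. -/
noncomputable def P0k : ℤ → Measure ℤ := fun x => Measure.dirac x

/-- `P₁(x,·) = π`. -/
noncomputable def P1k : ℤ → Measure ℤ := fun _ => pi16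

/-- `Q₀(x,·) = Q₁(x,·) = ε π + (1-ε) δ_{-x}`. -/
noncomputable def Qk (ε : ℝ) : ℤ → Measure ℤ :=
  fun x => ENNReal.ofReal ε • pi16 + ENNReal.ofReal (1 - ε) • Measure.dirac (-x)

lemma int_d (f : ℤ → ℝ) (a : ℤ) : Integrable f (Measure.dirac a) := by
  refine ⟨(measurable_from_top (f := f)).stronglyMeasurable.aestronglyMeasurable, ?_⟩
  rw [HasFiniteIntegral, lintegral_dirac]
  exact ENNReal.coe_lt_top

lemma int_p (f : ℤ → ℝ) : Integrable f pi16 := by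
  unfold pi16
  exact ((int_d f 1).add_measure (int_d f (-1))).smul_measure (by simp)

lemma int_pi16 (f : ℤ → ℝ) : ∫ x, f x ∂pi16 = (f 1 + f (-1)) / 2 := by
  rw [pi16, integral_smul_measure, integral_add_measure (int_d f 1) (int_d f (-1)),
    integral_dirac, integral_dirac]
  simp [ENNReal.toReal_inv]
  ring

lemma actF_P0 (g : ℤ → ℝ) : actF P0k g = g :=
  funext fun x => integral_dirac g x

lemma actF_P1 (g : ℤ → ℝ) (x : ℤ) : actF P1k g x = (g 1 + g (-1)) / 2 :=
  int_pi16 g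

lemma actF_Q {ε : ℝ} (hε0 : 0 ≤ ε) (hε1 : ε ≤ 1) (g : ℤ → ℝ) (x : ℤ) :
    actF (Qk ε) g x = ε * ((g 1 + g (-1)) / 2) + (1 - ε) * g (-x) := by
  show ∫ y, g y ∂(ENNReal.ofReal ε • pi16 + ENNReal.ofReal (1 - ε) • Measure.dirac (-x)) = _
  rw [integral_add_measure ((int_p g).smul_measure ENNReal.ofReal_ne_top)
      ((int_d g (-x)).smul_measure ENNReal.ofReal_ne_top),
    integral_smul_measure, integral_smul_measure, integral_dirac, int_pi16,
    ENNReal.toReal_ofReal hε0, ENNReal.toReal_ofReal (by linarith)]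
  simp [smul_eq_mul]

lemma T0_iter {ε : ℝ} (hε0 : 0 ≤ ε) (hε1 : ε ≤ 1) (k : ℕ) :
    (fun g => actF P0k (actF (Qk ε) g))^[k] (fun x : ℤ => (x : ℝ)) =
      fun x : ℤ => (ε - 1) ^ k * (x : ℝ) := by
  induction k with
  | zero => simp
  | succ k ih =>
    rw [Function.iterate_succ_apply', ih]
    show actF P0k (actF (Qk ε) fun x : ℤ => (ε - 1) ^ k * (x : ℝ)) = _
    rw [actF_P0]
    funext x
    rw [actF_Q hε0 hε1]
    push_cast
    ring

lemma cov0 {ε : ℝ} (hε0 : 0 ≤ ε) (hε1 : ε ≤ 1) (k : ℕ) :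
    covH pi16 (fun g => actF P0k (actF (Qk ε) g)) (fun x : ℤ => (x : ℝ)) k = (ε - 1) ^ k := by
  unfold covH
  rw [T0_iter hε0 hε1, int_pi16, int_pi16]
  push_cast
  ring

lemma T1_zero {ε : ℝ} (hε0 : 0 ≤ ε) (hε1 : ε ≤ 1) :
    actF P1k (actF (Qk ε) (fun _ : ℤ => (0 : ℝ))) = fun _ : ℤ => (0 : ℝ) := by
  funext x
  rw [actF_P1, actF_Q hε0 hε1, actF_Q hε0 hε1]
  ring

lemma T1_one {ε : ℝ} (hε0 : 0 ≤ ε) (hε1 : ε ≤ 1) :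
    actF P1k (actF (Qk ε) (fun x : ℤ => (x : ℝ))) = fun _ : ℤ => (0 : ℝ) := by
  funext x
  rw [actF_P1, actF_Q hε0 hε1, actF_Q hε0 hε1]
  push_cast
  ring

lemma T1_iter {ε : ℝ} (hε0 : 0 ≤ ε) (hε1 : ε ≤ 1) (k : ℕ) (hk : 1 ≤ k) :
    (fun g => actF P1k (actF (Qk ε) g))^[k] (fun x : ℤ => (x : ℝ)) = fun _ : ℤ => (0 : ℝ) := by
  induction k with
  | zero => omega
  | succ k ih =>
    rcases Nat.eq_or_lt_of_le hk with h | h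
    · rw [← h]
      simpa using T1_one hε0 hε1
    · rw [Function.iterate_succ_apply', ih (by omega)]
      exact T1_zero hε0 hε1

lemma cov1 {ε : ℝ} (hε0 : 0 ≤ ε) (hε1 : ε ≤ 1) (k : ℕ) :
    covH pi16 (fun g => actF P1k (actF (Qk ε) g)) (fun x : ℤ => (x : ℝ)) k =
      if k = 0 then 1 else 0 := by
  unfold covH
  rcases Nat.eq_zero_or_pos k with h | h
  · subst h
    simp only [Function.iterate_zero, id_eq, if_pos rfl]
    rw [int_pi16, int_pi16]
    norm_num
  · rw [T1_iter hε0 hε1 k h, if_neg (by omega), int_pi16, int_pi16]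
    norm_num

lemma geom_shift (r : ℝ) (n : ℕ) :
    ∑ j ∈ Finset.range n, r ^ (n - j) = r * ∑ j ∈ Finset.range n, r ^ j := by
  rw [Finset.mul_sum, ← Finset.sum_range_reflect]
  refine Finset.sum_congr rfl fun j hj => ?_
  rw [Finset.mem_range] at hj
  rw [← pow_succ']
  congr 1
  omega

lemma S_closed {r : ℝ} (hr : r ≠ 1) (n : ℕ) :
    ∑ i ∈ Finset.range n, ∑ j ∈ Finset.range n, r ^ (max i j - min i j) =
      n * (1 + r) / (1 - r) - 2 * r * (1 - r ^ n) / (1 - r) ^ 2 := by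
  have h1 : (1 : ℝ) - r ≠ 0 := fun h => hr (by linarith)
  have h2 : r - 1 ≠ 0 := fun h => hr (by linarith)
  induction n with
  | zero => simp
  | succ n ih =>
    have hgeom : ∑ j ∈ Finset.range n, r ^ j = (r ^ n - 1) / (r - 1) := geom_sum_eq hr n
    have key : ∀ i ∈ Finset.range n, ∑ j ∈ Finset.range (n + 1), r ^ (max i j - min i j)
        = (∑ j ∈ Finset.range n, r ^ (max i j - min i j)) + r ^ (n - i) := by
      intro i hi
      rw [Finset.mem_range] at hi
      rw [Finset.sum_range_succ]
      congr 1
      congr 1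
      omega
    rw [Finset.sum_range_succ, Finset.sum_congr rfl key, Finset.sum_add_distrib,
      Finset.sum_range_succ]
    have hnn : ∀ j ∈ Finset.range n, r ^ (max n j - min n j) = r ^ (n - j) := by
      intro j hj
      rw [Finset.mem_range] at hj
      congr 1
      omega
    rw [Finset.sum_congr rfl hnn, ih, geom_shift, hgeom]
    simp only [max_self, min_self, Nat.sub_self, pow_zero]
    push_cast
    field_simp
    ring

lemma lim_aux {r : ℝ} (hr : |r| < 1) :
    Tendsto (fun n : ℕ =>
      ((n : ℝ) * (1 + r) / (1 - r) - 2 * r * (1 - r ^ n) / (1 - r) ^ 2) / n)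
      atTop (𝓝 ((1 + r) / (1 - r))) := by
  have h1 : (1 : ℝ) - r ≠ 0 := by
    have := abs_lt.mp hr
    intro h; linarith
  have hpow : Tendsto (fun n : ℕ => r ^ n) atTop (𝓝 0) :=
    tendsto_pow_atTop_nhds_zero_of_abs_lt_one hr
  have hinv : Tendsto (fun n : ℕ => (1 : ℝ) / n) atTop (𝓝 0) :=
    tendsto_one_div_atTop_nhds_zero_nat
  have hmain : Tendsto (fun n : ℕ =>
      (1 + r) / (1 - r) - (2 * r * (1 - r ^ n) / (1 - r) ^ 2) * (1 / n))
      atTop (𝓝 ((1 + r) / (1 - r) - (2 * r * (1 - (0:ℝ)) / (1 - r) ^ 2) * 0)) := by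
    refine tendsto_const_nhds.sub (Tendsto.mul ?_ hinv)
    exact ((tendsto_const_nhds.sub hpow).const_mul _).div_const _
  simp only [sub_zero, mul_zero] at hmain
  refine hmain.congr' ?_
  filter_upwards [eventually_ge_atTop 1] with n hn
  have hn' : (n : ℝ) ≠ 0 := Nat.cast_ne_zero.mpr (by omega)
  field_simp

/-- Counterexample (Remark 18): on `{-1,1}` with `π` uniform, `P₀ = id`,
`Q₀ = Q₁ = επ + (1-ε)δ_{-x}`, `P₁(x,·) = π`, the covariance orderings `P₁ ⪰₁ P₀`,
`Q₁ ⪰₁ Q₀` hold, yet for `f = id`, `v(f, P₀Q₀) = ε/(2-ε) < 1 = v(f, P₁Q₁)`: the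
first-coordinate-fixing assumption of Lemma 17 is essential. -/
theorem stmt16 (ε : ℝ) (hε0 : 0 < ε) (hε1 : ε < 1) :
    (∀ g : ℤ → ℝ, MemLp g 2 pi16 →
      ∫ x, g x * actF P1k g x ∂pi16 ≤ ∫ x, g x * actF P0k g x ∂pi16) ∧
    (∀ g : ℤ → ℝ, MemLp g 2 pi16 →
      ∫ x, g x * actF (Qk ε) g x ∂pi16 ≤ ∫ x, g x * actF (Qk ε) g x ∂pi16) ∧
    Tendsto (fun n : ℕ =>
        varH pi16 (fun g => actF P0k (actF (Qk ε) g)) (fun x : ℤ => (x : ℝ)) n / n)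
      atTop (𝓝 (ε / (2 - ε))) ∧
    Tendsto (fun n : ℕ =>
        varH pi16 (fun g => actF P1k (actF (Qk ε) g)) (fun x : ℤ => (x : ℝ)) n / n)
      atTop (𝓝 1) ∧
    ε / (2 - ε) < 1 := by
  have hε0' : (0 : ℝ) ≤ ε := le_of_lt hε0
  have hε1' : ε ≤ 1 := le_of_lt hε1
  refine ⟨?_, fun g _ => le_refl _, ?_, ?_, ?_⟩
  · intro g _
    rw [actF_P0]
    have h1 : ∫ x, g x * actF P1k g x ∂pi16 = ((g 1 + g (-1)) / 2) ^ 2 := by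
      rw [int_pi16 (fun x => g x * actF P1k g x), actF_P1, actF_P1]
      ring
    have h2 : ∫ x, g x * g x ∂pi16 = (g 1 * g 1 + g (-1) * g (-1)) / 2 :=
      int_pi16 (fun x => g x * g x)
    rw [h1, h2]
    nlinarith [sq_nonneg (g 1 - g (-1))]
  · -- the P0 chain
    set r : ℝ := ε - 1 with hrdef
    have hr1 : r ≠ 1 := by rw [hrdef]; intro h; linarith
    have hvar : ∀ n : ℕ, varH pi16 (fun g => actF P0k (actF (Qk ε) g)) (fun x : ℤ => (x : ℝ)) n
        = (n : ℝ) * (1 + r) / (1 - r) - 2 * r * (1 - r ^ n) / (1 - r) ^ 2 := by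
      intro n
      rw [← S_closed hr1 n]
      exact Finset.sum_congr rfl fun i _ => Finset.sum_congr rfl fun j _ => cov0 hε0' hε1' _
    have habs : |r| < 1 := by
      rw [abs_lt, hrdef]; constructor <;> linarith
    have heq : (1 + r) / (1 - r) = ε / (2 - ε) := by
      rw [hrdef]; ring_nf
    rw [show ε / (2 - ε) = (1 + r) / (1 - r) from heq.symm]
    exact (lim_aux habs).congr (fun n => by rw [hvar n])
  · -- the P1 chain
    have hvar : ∀ n : ℕ, varH pi16 (fun g => actF P1k (actF (Qk ε) g)) (fun x : ℤ => (x : ℝ)) n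
        = (n : ℝ) := by
      intro n
      unfold varH
      have : ∀ i ∈ Finset.range n,
          ∑ j ∈ Finset.range n, covH pi16 (fun g => actF P1k (actF (Qk ε) g))
            (fun x : ℤ => (x : ℝ)) (max i j - min i j) = 1 := by
        intro i hi
        have hterm : ∀ j ∈ Finset.range n, covH pi16 (fun g => actF P1k (actF (Qk ε) g))
            (fun x : ℤ => (x : ℝ)) (max i j - min i j) = if j = i then 1 else 0 := by
          intro j hj
          rw [cov1 hε0' hε1']
          exact if_congr (by omega) rfl rfl
        rw [Finset.sum_congr rfl hterm, Finset.sum_ite_eq' (Finset.range n) i (fun _ => (1:ℝ))]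
        simp [hi]
      rw [Finset.sum_congr rfl this, Finset.sum_const, Finset.card_range]
      simp
    have hmain : Tendsto (fun n : ℕ => (n : ℝ) / n) atTop (𝓝 1) := by
      refine Tendsto.congr' ?_ tendsto_const_nhds
      filter_upwards [eventually_ge_atTop 1] with n hn
      have hn' : (n : ℝ) ≠ 0 := Nat.cast_ne_zero.mpr (by omega)
      rw [div_self hn']
    exact hmain.congr (fun n => by rw [hvar n])
  · rw [div_lt_one (by linarith)]
    linarith
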